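/- (Qubit second law for coherences.) Let β > 0, ΔE > 0, E = e^{β ΔE}. Let Λ be a linear map on 2×2 complex matrices whose Choi matrix is positive semidefinite, which is block-diagonal with Λ(E_{01}) = α_{01} • E_{01} and transition probabilities T_{ij} = p(i→j) (the (j,j) entry of Λ(E_{ii})), and which is Gibbs-stationary: E·T_{00} + T_{10} = E and E·T_{01} + T_{11} = 1. Let p ∈ [0,1], α ∈ ℂ, set ρ = [[p, α],[conj(α), 1−p]], and write Λ(ρ) = [[q, χ],[conj(χ), 1−q]]. If p ≠ (1−p)·E, then |χ| ≤ |α| · κ, where κ = √((q − (1−p)E)(p − (1−q)E)) / |p − (1−p)E|. -/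

import Mathlib

open Matrix ComplexOrder

lemma psd_abs_sq_le {n : Type*} [Fintype n] [DecidableEq n] {M : Matrix n n ℂ}
    (hM : M.PosSemidef) (s t : n) :
    ‖M s t‖ ^ 2 ≤ (M s s).re * (M t t).re := by
  obtain ⟨B, rfl⟩ : ∃ B : Matrix n n ℂ, M = Bᴴ * B := by
    open MatrixOrder in exact CStarAlgebra.nonneg_iff_eq_star_mul_self.mp hM.nonneg
  set u : EuclideanSpace ℂ n := WithLp.toLp 2 (fun k => B k s) with hu
  set v : EuclideanSpace ℂ n := WithLp.toLp 2 (fun k => B k t) with hv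
  have hst : (Bᴴ * B) s t = inner ℂ u v := by
    simp [Matrix.mul_apply, Matrix.conjTranspose_apply, PiLp.inner_apply, RCLike.inner_apply, hu, hv, mul_comm]
  have hss : ((Bᴴ * B) s s).re = ‖u‖ ^ 2 := by
    have : (Bᴴ * B) s s = inner ℂ u u := by
      simp [Matrix.mul_apply, Matrix.conjTranspose_apply, PiLp.inner_apply, RCLike.inner_apply, hu, mul_comm, -inner_self_eq_norm_sq_to_K]
    rw [this, ← inner_self_eq_norm_sq (𝕜 := ℂ)]; rfl
  have htt : ((Bᴴ * B) t t).re = ‖v‖ ^ 2 := by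
    have : (Bᴴ * B) t t = inner ℂ v v := by
      simp [Matrix.mul_apply, Matrix.conjTranspose_apply, PiLp.inner_apply, RCLike.inner_apply, hv, mul_comm, -inner_self_eq_norm_sq_to_K]
    rw [this, ← inner_self_eq_norm_sq (𝕜 := ℂ)]; rfl
  rw [hst, hss, htt]
  calc ‖(inner ℂ u v : ℂ)‖ ^ 2 ≤ (‖u‖ * ‖v‖) ^ 2 :=
        pow_le_pow_left₀ (norm_nonneg _) (norm_inner_le_norm (𝕜 := ℂ) u v) 2
    _ = ‖u‖^2 * ‖v‖^2 := by ring

/-- **Qubit second law for coherences.** Let `Λ` be a linear map on `2×2` complex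
matrices with positive semidefinite Choi matrix, block-diagonal (with damping factors
`α_{ij}` and transition probabilities `T i j = (Λ(E_{ii}))_{jj}`), and Gibbs-stationary
(`E·T₀₀ + T₁₀ = E` and `E·T₀₁ + T₁₁ = 1` with `E = e^{βΔE}`).  If
`ρ = [[p, α],[α*, 1−p]]` and `Λ(ρ) = [[q, χ],[χ*, 1−q]]` with `p ≠ (1−p)E`, then
`|χ| ≤ |α| · κ` where `κ = √((q − (1−p)E)(p − (1−q)E)) / |p − (1−p)E|`. -/
theorem qubit_coherence_second_law (β ΔE : ℝ) (hβ : 0 < β) (hΔE : 0 < ΔE)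
    (Λ : Matrix (Fin 2) (Fin 2) ℂ →ₗ[ℂ] Matrix (Fin 2) (Fin 2) ℂ)
    (hChoi : Matrix.PosSemidef (Matrix.of fun s t : Fin 2 × Fin 2 =>
      Λ (Matrix.single s.1 t.1 1) s.2 t.2))
    (a : Fin 2 → Fin 2 → ℂ)
    (ha : ∀ i j : Fin 2, i ≠ j →
      Λ (Matrix.single i j 1) = a i j • Matrix.single i j 1)
    (hdiag : ∀ i : Fin 2, (Λ (Matrix.single i i 1)).IsDiag)
    (T : Fin 2 → Fin 2 → ℝ)
    (hT : ∀ i j : Fin 2, Λ (Matrix.single i i 1) j j = ((T i j : ℝ) : ℂ))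
    (hgibbs0 : Real.exp (β * ΔE) * T 0 0 + T 1 0 = Real.exp (β * ΔE))
    (hgibbs1 : Real.exp (β * ΔE) * T 0 1 + T 1 1 = 1)
    (p : ℝ) (hp : p ∈ Set.Icc (0 : ℝ) 1) (α : ℂ)
    (q : ℝ) (χ : ℂ)
    (hout : Λ !![((p : ℝ) : ℂ), α; (starRingEnd ℂ) α, 1 - ((p : ℝ) : ℂ)]
          = !![((q : ℝ) : ℂ), χ; (starRingEnd ℂ) χ, 1 - ((q : ℝ) : ℂ)])
    (hne : p ≠ (1 - p) * Real.exp (β * ΔE)) :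
    ‖χ‖ ≤ ‖α‖ *
      (Real.sqrt ((q - (1 - p) * Real.exp (β * ΔE)) * (p - (1 - q) * Real.exp (β * ΔE))) /
        |p - (1 - p) * Real.exp (β * ΔE)|) := by
  set E := Real.exp (β * ΔE) with hE
  -- decompose the input state
  have hρ : (!![((p : ℝ) : ℂ), α; (starRingEnd ℂ) α, 1 - ((p : ℝ) : ℂ)]) =
      ((p : ℝ) : ℂ) • Matrix.single 0 0 1 + α • Matrix.single 0 1 1 +
      ((starRingEnd ℂ) α) • Matrix.single 1 0 1 +
      (1 - ((p : ℝ) : ℂ)) • Matrix.single 1 1 1 := by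
    ext i j
    fin_cases i <;> fin_cases j <;>
      simp [Matrix.single]
  have hL : (((p : ℝ) : ℂ) • Λ (Matrix.single 0 0 1)
      + α • (a 0 1 • Matrix.single 0 1 1)
      + ((starRingEnd ℂ) α) • (a 1 0 • Matrix.single 1 0 1)
      + (1 - ((p : ℝ) : ℂ)) • Λ (Matrix.single 1 1 1))
      = !![((q : ℝ) : ℂ), χ; (starRingEnd ℂ) χ, 1 - ((q : ℝ) : ℂ)] := by
    rw [← hout, hρ, map_add, map_add, map_add, _root_.map_smul, _root_.map_smul, _root_.map_smul, _root_.map_smul,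
      ha 0 1 (by decide), ha 1 0 (by decide)]
  have off0 : Λ (Matrix.single 0 0 1) 0 1 = 0 := (hdiag 0) (by decide)
  have off1 : Λ (Matrix.single 1 1 1) 0 1 = 0 := (hdiag 1) (by decide)
  -- entry (0,0)
  have h00 : ((p : ℝ) : ℂ) * (T 0 0 : ℝ) + (1 - ((p : ℝ) : ℂ)) * (T 1 0 : ℝ) = ((q : ℝ) : ℂ) := by
    have h := congrFun (congrFun hL 0) 0
    simpa [Matrix.add_apply, Matrix.smul_apply, hT 0 0, hT 1 0,
      Matrix.single_apply_same, Matrix.single_apply_of_ne] using h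
  -- entry (1,1)
  have h11 : ((p : ℝ) : ℂ) * (T 0 1 : ℝ) + (1 - ((p : ℝ) : ℂ)) * (T 1 1 : ℝ) = 1 - ((q : ℝ) : ℂ) := by
    have h := congrFun (congrFun hL 1) 1
    simpa [Matrix.add_apply, Matrix.smul_apply, hT 0 1, hT 1 1,
      Matrix.single_apply_same, Matrix.single_apply_of_ne] using h
  -- entry (0,1)
  have h01 : α * a 0 1 = χ := by
    have h := congrFun (congrFun hL 0) 1
    simpa [Matrix.add_apply, Matrix.smul_apply, off0, off1, mul_comm,
      Matrix.single_apply_same, Matrix.single_apply_of_ne] using h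
  -- real versions
  have hq : p * T 0 0 + (1 - p) * T 1 0 = q := by exact_mod_cast h00
  have hq1 : p * T 0 1 + (1 - p) * T 1 1 = 1 - q := by exact_mod_cast h11
  -- PSD facts
  set J : Matrix (Fin 2 × Fin 2) (Fin 2 × Fin 2) ℂ := Matrix.of fun s t : Fin 2 × Fin 2 =>
      Λ (Matrix.single s.1 t.1 1) s.2 t.2 with hJ
  have hkey := psd_abs_sq_le hChoi (0,0) (1,1)
  have hJ01 : J ((0:Fin 2),(0:Fin 2)) ((1:Fin 2),(1:Fin 2)) = a 0 1 := by
    simp [hJ, ha 0 1 (by decide), Matrix.smul_apply, Matrix.single_apply_same]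
  have hJ00 : J ((0:Fin 2),(0:Fin 2)) ((0:Fin 2),(0:Fin 2)) = ((T 0 0 : ℝ) : ℂ) := by
    simp [hJ, hT 0 0]
  have hJ11 : J ((1:Fin 2),(1:Fin 2)) ((1:Fin 2),(1:Fin 2)) = ((T 1 1 : ℝ) : ℂ) := by
    simp [hJ, hT 1 1]
  rw [hJ01, hJ00, hJ11] at hkey
  simp only [Complex.ofReal_re] at hkey
  have hT00 : 0 ≤ T 0 0 := by
    have h2 := hChoi.re_dotProduct_nonneg (Pi.single ((0:Fin 2),(0:Fin 2)) 1)
    have h' : J (0 : Fin 2 × Fin 2) (0 : Fin 2 × Fin 2) = ((T 0 0 : ℝ) : ℂ) := hJ00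
    simpa [dotProduct, Matrix.mulVec, Pi.single_apply, Finset.sum_ite_eq, apply_ite,
      h', hJ00] using h2
  have hT11 : 0 ≤ T 1 1 := by
    have h2 := hChoi.re_dotProduct_nonneg (Pi.single ((1:Fin 2),(1:Fin 2)) 1)
    have h' : J (1 : Fin 2 × Fin 2) (1 : Fin 2 × Fin 2) = ((T 1 1 : ℝ) : ℂ) := hJ11
    simpa [dotProduct, Matrix.mulVec, Pi.single_apply, Finset.sum_ite_eq, apply_ite,
      h', hJ11] using h2
  -- key algebraic identities
  set d := p - (1 - p) * E with hd
  have k1 : q - (1 - p) * E = T 0 0 * d := by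
    rw [hd]; linear_combination (1 - p) * hgibbs0 - hq
  have k2 : p - (1 - q) * E = T 1 1 * d := by
    rw [hd]; linear_combination E * hq1 - p * hgibbs1
  have hdne : d ≠ 0 := sub_ne_zero.mpr hne
  -- rewrite the bound
  have hκ : Real.sqrt ((q - (1 - p) * E) * (p - (1 - q) * E)) / |d|
      = Real.sqrt (T 0 0 * T 1 1) := by
    rw [k1, k2, show T 0 0 * d * (T 1 1 * d) = T 0 0 * T 1 1 * d ^ 2 by ring,
      Real.sqrt_mul (mul_nonneg hT00 hT11), Real.sqrt_sq_eq_abs,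
      mul_div_assoc, div_self (abs_ne_zero.mpr hdne), mul_one]
  rw [hκ, ← h01, norm_mul]
  apply mul_le_mul_of_nonneg_left _ (norm_nonneg α)
  have : ‖a 0 1‖ = Real.sqrt (‖a 0 1‖ ^ 2) := by
    rw [Real.sqrt_sq (norm_nonneg _)]
  rw [this]
  exact Real.sqrt_le_sqrt hkey
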